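/- Let k ≥ 3 be a real number, s = √(k(k-2)), α = k - 1 + s, β = k - 1 - s. For every integer i ≥ 0, define the real numbers a_i = (α^(i+1) + α^i + β^(i+1) + β^i)/2 and A_i = (α^i + β^i)/2 + (k/(2s))·(α^i - β^i). Then a_i² = k(k-2)·A_i² + 2k. -/

import Mathlib

lemma key_identity (k s x y : ℝ) (hsne : s ≠ 0) (hs2 : s ^ 2 = k * (k - 2))
    (hxy : x * y = 1) :
    (((k - 1 + s) * x + x + ((k - 1 - s) * y + y)) / 2) ^ 2 =
      k * (k - 2) * ((x + y) / 2 + (k / (2 * s)) * (x - y)) ^ 2 + 2 * k := by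
  rw [← hs2]
  have h : s ^ 2 * ((x + y) / 2 + (k / (2 * s)) * (x - y)) ^ 2 =
      (s * (x + y) / 2 + k * (x - y) / 2) ^ 2 := by
    field_simp
  rw [h]
  linear_combination (k ^ 2 - s ^ 2) * hxy - hs2

theorem a_sq_eq (k : ℝ) (hk : 3 ≤ k) (i : ℕ) (s α β a A : ℝ)
    (hs : s = Real.sqrt (k * (k - 2)))
    (hα : α = k - 1 + s) (hβ : β = k - 1 - s)
    (ha : a = (α ^ (i + 1) + α ^ i + β ^ (i + 1) + β ^ i) / 2)
    (hA : A = (α ^ i + β ^ i) / 2 + (k / (2 * s)) * (α ^ i - β ^ i)) :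
    a ^ 2 = k * (k - 2) * A ^ 2 + 2 * k := by
  have hkk : (0:ℝ) < k * (k - 2) := by nlinarith
  have hs0 : 0 < s := by rw [hs]; exact Real.sqrt_pos.mpr hkk
  have hs2 : s ^ 2 = k * (k - 2) := by rw [hs]; exact Real.sq_sqrt hkk.le
  have hab : α * β = 1 := by rw [hα, hβ]; nlinarith [hs2]
  have hxy : α ^ i * β ^ i = 1 := by rw [← mul_pow, hab, one_pow]
  subst hα hβ
  have := key_identity k s ((k - 1 + s) ^ i) ((k - 1 - s) ^ i) (ne_of_gt hs0) hs2 hxy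
  rw [ha, hA, pow_succ, pow_succ]
  linear_combination this
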